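/- In the field ℚ(u) of rational functions in one variable u, set q := u⁴, {m} := u^{2m} − u^{−2m} for integers m, {m}! := ∏_{i=1}^{m} {i}, and qbinom(m, j) := {m}!/({j}!·{m−j}!) for 0 ≤ j ≤ m, with the convention qbinom(m, j) := 0 when j < 0 or j > m. Then for all integers k ≥ 0 and 1 ≤ j ≤ k+1, the following identity holds in ℚ(u): qbinom(2k+1, k+j) + qbinom(2k+1, k−j) = ({k+1}/{2k+2})·qbinom(2k+2, k+j+1)·(u^{2j} + u^{−2j}). -/

import Mathlib

/-- The generator `u` of the rational function field `ℚ(u)`. -/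
noncomputable def u : RatFunc ℚ := RatFunc.X

/-- `{m} = u^{2m} - u^{-2m}`. -/
noncomputable def qbr (m : ℤ) : RatFunc ℚ := u ^ (2 * m) - u ^ (-(2 * m))

/-- `{m}! = ∏_{i=1}^m {i}`. -/
noncomputable def qfac (m : ℕ) : RatFunc ℚ := ∏ i ∈ Finset.range m, qbr ((i : ℤ) + 1)

/-- The balanced quantum binomial `qbinom m j = {m}!/({j}!·{m-j}!)` for `0 ≤ j ≤ m`,
with the convention that it vanishes for `j < 0` or `j > m`. -/
noncomputable def qbinom (m : ℕ) (j : ℤ) : RatFunc ℚ :=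
  if 0 ≤ j ∧ j ≤ (m : ℤ) then qfac m / (qfac j.toNat * qfac (m - j.toNat)) else 0

lemma hu : (u : RatFunc ℚ) ≠ 0 := RatFunc.X_ne_zero

lemma upow_ne_one (n : ℕ) (hn : 0 < n) : (RatFunc.X : RatFunc ℚ) ^ n ≠ 1 := by
  rw [← RatFunc.algebraMap_X, ← map_pow, ← map_one (algebraMap (Polynomial ℚ) (RatFunc ℚ))]
  intro h
  have h2 := congrArg (Polynomial.eval 0) (RatFunc.algebraMap_injective ℚ h)
  simp [zero_pow hn.ne'] at h2

lemma uzpow_ne_one (z : ℤ) (hz : z ≠ 0) : u ^ z ≠ 1 := by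
  rcases lt_or_gt_of_ne hz with h | h
  · intro he
    have : u ^ (-z) = 1 := by
      rw [zpow_neg, he, inv_one]
    rw [show (-z) = ((-z).toNat : ℤ) by omega, zpow_natCast] at this
    exact upow_ne_one (-z).toNat (by omega) this
  · intro he
    rw [show z = (z.toNat : ℤ) by omega, zpow_natCast] at he
    exact upow_ne_one z.toNat (by omega) he

lemma qbr_ne_zero (m : ℤ) (hm : m ≠ 0) : qbr m ≠ 0 := by
  unfold qbr
  intro h
  have he : u ^ (2 * m) = u ^ (-(2 * m)) := sub_eq_zero.mp h
  have h1 : u ^ (2 * m) * u ^ (-(2 * m)) = 1 := by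
    rw [← zpow_add₀ hu]; simp
  have : u ^ (4 * m) = 1 := by
    rw [show 4*m = 2*m + 2*m by ring, zpow_add₀ hu]
    nth_rewrite 2 [he]
    exact h1
  exact uzpow_ne_one (4 * m) (by omega) this

lemma qfac_ne_zero (m : ℕ) : qfac m ≠ 0 := by
  unfold qfac
  apply Finset.prod_ne_zero_iff.mpr
  intro i _
  exact qbr_ne_zero _ (by omega)

lemma qfac_succ (m : ℕ) : qfac (m + 1) = qfac m * qbr (m + 1) := by
  unfold qfac
  rw [Finset.prod_range_succ]

lemma qfac_zero : qfac 0 = 1 := by simp [qfac]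

/-- key identity -/
lemma qbr_key (a b : ℤ) : qbr (a + b) + qbr (a - b) = qbr a * (u ^ (2 * b) + u ^ (-(2 * b))) := by
  unfold qbr
  rw [show 2 * (a + b) = 2*a + 2*b by ring, show 2 * (a - b) = 2*a + -(2*b) by ring]
  rw [show -(2*a + 2*b) = -(2*a) + -(2*b) by ring, show -(2*a + -(2*b)) = -(2*a) + 2*b by ring]
  rw [zpow_add₀ hu, zpow_add₀ hu, zpow_add₀ hu, zpow_add₀ hu]
  ring

/-- For `k ≥ 0` and `1 ≤ j ≤ k+1`, in `ℚ(u)`: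
`qbinom(2k+1, k+j) + qbinom(2k+1, k-j)
  = ({k+1}/{2k+2})·qbinom(2k+2, k+j+1)·(u^{2j} + u^{-2j})`. -/
theorem stmt19 (k j : ℕ) (hj1 : 1 ≤ j) (hj2 : j ≤ k + 1) :
    qbinom (2 * k + 1) ((k : ℤ) + j) + qbinom (2 * k + 1) ((k : ℤ) - j) =
      qbr ((k : ℤ) + 1) / qbr (2 * (k : ℤ) + 2) * qbinom (2 * k + 2) ((k : ℤ) + j + 1) *
        (u ^ (2 * (j : ℤ)) + u ^ (-(2 * (j : ℤ)))) := by
  have key := qbr_key ((k : ℤ) + 1) (j : ℤ)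
  have h2k2 : qbr (2 * (k : ℤ) + 2) = qbr ((k:ℤ)+1) * (u ^ (2 * ((k:ℤ)+1)) + u ^ (-(2 * ((k:ℤ)+1)))) := by
    have := qbr_key ((k : ℤ) + 1) ((k : ℤ) + 1)
    rw [show (k:ℤ) + 1 - ((k:ℤ)+1) = 0 by ring, show (k:ℤ) + 1 + ((k:ℤ)+1) = 2*(k:ℤ)+2 by ring] at this
    simpa [qbr] using this
  rcases eq_or_lt_of_le hj2 with hjk | hjk
  · -- j = k + 1
    subst hjk
    rw [qbinom, qbinom, qbinom]
    rw [if_pos ⟨by push_cast; omega, by push_cast; omega⟩,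
        if_neg (by push_cast; omega), if_pos ⟨by push_cast; omega, by push_cast; omega⟩]
    have e1 : ((k:ℤ) + (k+1:ℕ)).toNat = 2*k+1 := by push_cast; omega
    have e2 : ((k:ℤ) + (k+1:ℕ) + 1).toNat = 2*k+2 := by push_cast; omega
    rw [e1, e2]
    simp only [Nat.sub_self, qfac_zero, mul_one]
    rw [div_self (qfac_ne_zero _), div_self (qfac_ne_zero _)]
    have hne : (u ^ (2 * ((k:ℤ)+1)) + u ^ (-(2 * ((k:ℤ)+1)))) ≠ 0 := by
      intro h0
      have : qbr (2 * (k:ℤ) + 2) = 0 := by rw [h2k2, h0, mul_zero]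
      exact qbr_ne_zero _ (by omega) this
    have hb : qbr ((k:ℤ)+1) ≠ 0 := qbr_ne_zero _ (by omega)
    rw [show ((k+1:ℕ):ℤ) = (k:ℤ)+1 by push_cast; ring, h2k2]
    set E := u ^ (2 * ((k:ℤ)+1)) + u ^ (-(2 * ((k:ℤ)+1))) with hE
    field_simp
    norm_num
  · -- j ≤ k
    have hjk' : j ≤ k := by omega
    rw [qbinom, qbinom, qbinom]
    rw [if_pos ⟨by push_cast; omega, by push_cast; omega⟩,
        if_pos ⟨by push_cast; omega, by push_cast; omega⟩,
        if_pos ⟨by push_cast; omega, by push_cast; omega⟩]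
    have e1 : ((k:ℤ) + j).toNat = k + j := by omega
    have e2 : ((k:ℤ) - j).toNat = k - j := by omega
    have e3 : ((k:ℤ) + j + 1).toNat = k + j + 1 := by omega
    rw [e1, e2, e3]
    have f1 : 2*k + 1 - (k + j) = (k - j) + 1 := by omega
    have f2 : 2*k + 1 - (k - j) = (k + j) + 1 := by omega
    have f3 : 2*k + 2 - (k + j + 1) = (k - j) + 1 := by omega
    rw [f1, f2, f3]
    rw [show 2*k+2 = (2*k+1)+1 from rfl, qfac_succ (2*k+1), qfac_succ (k+j), qfac_succ (k-j)]
    -- abbreviations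
    have cb : ((k - j : ℕ) : ℤ) + 1 = (k:ℤ) + 1 - j := by push_cast [hjk']; ring
    have ca : ((k + j : ℕ) : ℤ) + 1 = (k:ℤ) + 1 + j := by push_cast; ring
    rw [cb, ca]
    rw [show ((2*k+1:ℕ):ℤ) + 1 = 2*(k:ℤ)+2 by push_cast; ring]
    have hA := qfac_ne_zero (2*k+1)
    have hB := qfac_ne_zero (k+j)
    have hC := qfac_ne_zero (k-j)
    have ha : qbr ((k:ℤ)+1+j) ≠ 0 := qbr_ne_zero _ (by omega)
    have hb : qbr ((k:ℤ)+1-j) ≠ 0 := qbr_ne_zero _ (by omega)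
    have hd : qbr (2*(k:ℤ)+2) ≠ 0 := qbr_ne_zero _ (by omega)
    rw [show (k:ℤ)+1+(j:ℤ) = ((k:ℤ)+1) + j from rfl] at key
    rw [show (k:ℤ)+1-(j:ℤ) = ((k:ℤ)+1) - j from rfl] at key
    set R := u ^ (2 * (j:ℤ)) + u ^ (-(2 * (j:ℤ))) with hR
    field_simp
    linear_combination key
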